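/- arXiv:1407.1012 — 7 statements merged into one kernel-verified Lean document; each statement's English description precedes it below -/
import Mathlib

section
/- Let F : C → D be a Frobenius monoidal functor between monoidal categories and let X be an object of C with a left dual SX (with unit d : 1 → X ⊗ SX and counit e : SX ⊗ X → 1). Then FSX is a left dual of FX, with unit F d ∘ f_0 followed by F_2 : 1 → FX ⊗ FSX, and counit F_0 ∘ F e ∘ f_2 : FSX ⊗ FX → 1; that is, the triangle identities hold for these morphisms. -/
open CategoryTheory MonoidalCategory CategoryTheory.Functor.LaxMonoidal
  CategoryTheory.Functor.OplaxMonoidal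

universe v₁ v₂ u₁ u₂

/-- A Frobenius monoidal functor preserves left duals: if `SX` is a left dual of `X`
(with unit `d` and counit `e`), then `F SX` is a left dual of `F X`, with unit
`ε ≫ F.map d ≫ δ` and counit `μ ≫ F.map e ≫ η`. -/
theorem frobenius_preserves_left_duals
    {C : Type u₁} [Category.{v₁} C] [MonoidalCategory C]
    {D : Type u₂} [Category.{v₂} D] [MonoidalCategory D]
    (F : C ⥤ D) [F.LaxMonoidal] [F.OplaxMonoidal]
    (frob1 : ∀ X Y Z : C,
      μ F X (Y ⊗ Z) ≫ F.map (α_ X Y Z).inv ≫ δ F (X ⊗ Y) Z =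
        (𝟙 (F.obj X) ⊗ₘ δ F Y Z) ≫ (α_ (F.obj X) (F.obj Y) (F.obj Z)).inv ≫
          (μ F X Y ⊗ₘ 𝟙 (F.obj Z)))
    (frob2 : ∀ X Y Z : C,
      μ F (X ⊗ Y) Z ≫ F.map (α_ X Y Z).hom ≫ δ F X (Y ⊗ Z) =
        (δ F X Y ⊗ₘ 𝟙 (F.obj Z)) ≫ (α_ (F.obj X) (F.obj Y) (F.obj Z)).hom ≫
          (𝟙 (F.obj X) ⊗ₘ μ F Y Z))
    (X SX : C) (d : 𝟙_ C ⟶ X ⊗ SX) (e : SX ⊗ X ⟶ 𝟙_ C)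
    (h1 : (λ_ X).inv ≫ (d ⊗ₘ 𝟙 X) ≫ (α_ X SX X).hom ≫ (𝟙 X ⊗ₘ e) ≫ (ρ_ X).hom = 𝟙 X)
    (h2 : (ρ_ SX).inv ≫ (𝟙 SX ⊗ₘ d) ≫ (α_ SX X SX).inv ≫ (e ⊗ₘ 𝟙 SX) ≫ (λ_ SX).hom = 𝟙 SX) :
    ((λ_ (F.obj X)).inv ≫ ((ε F ≫ F.map d ≫ δ F X SX) ⊗ₘ 𝟙 (F.obj X)) ≫
        (α_ (F.obj X) (F.obj SX) (F.obj X)).hom ≫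
        (𝟙 (F.obj X) ⊗ₘ (μ F SX X ≫ F.map e ≫ η F)) ≫ (ρ_ (F.obj X)).hom = 𝟙 (F.obj X)) ∧
    ((ρ_ (F.obj SX)).inv ≫ (𝟙 (F.obj SX) ⊗ₘ (ε F ≫ F.map d ≫ δ F X SX)) ≫
        (α_ (F.obj SX) (F.obj X) (F.obj SX)).inv ≫
        ((μ F SX X ≫ F.map e ≫ η F) ⊗ₘ 𝟙 (F.obj SX)) ≫ (λ_ (F.obj SX)).hom = 𝟙 (F.obj SX)) := by
  constructor
  · have h := frob2 X SX X
    have h1' : (λ_ X).inv ≫ d ▷ X ≫ (α_ X SX X).hom ≫ X ◁ e ≫ (ρ_ X).hom = 𝟙 X := by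
      simpa [tensorHom_id, id_tensorHom] using h1
    simp only [tensorHom_id, id_tensorHom] at h ⊢
    simp only [comp_whiskerRight, MonoidalCategory.whiskerLeft_comp, Category.assoc]
    slice_lhs 4 6 => rw [← h]
    simp only [Category.assoc]
    rw [μ_natural_left_assoc, δ_natural_right_assoc, left_unitality_inv_assoc,
      right_unitality_hom]
    simp only [← F.map_comp]
    rw [h1', F.map_id]
  · have h := frob1 SX X SX
    have h2' : (ρ_ SX).inv ≫ SX ◁ d ≫ (α_ SX X SX).inv ≫ e ▷ SX ≫ (λ_ SX).hom = 𝟙 SX := by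
      simpa [tensorHom_id, id_tensorHom] using h2
    simp only [tensorHom_id, id_tensorHom] at h ⊢
    simp only [comp_whiskerRight, MonoidalCategory.whiskerLeft_comp, Category.assoc]
    slice_lhs 4 6 => rw [← h]
    simp only [Category.assoc]
    rw [μ_natural_right_assoc, δ_natural_left_assoc, right_unitality_inv_assoc,
      left_unitality_hom]
    simp only [← F.map_comp]
    rw [h2', F.map_id]
end

section
/- Let F : C → D be a Frobenius monoidal functor between left autonomous categories. Then the natural transformation κ : SFX → FSX defined as the composite (e_{FX} ⊗ 1) ∘ (1 ⊗ F_2) ∘ (1 ⊗ F d_X) ∘ (1 ⊗ f_0) : SFX → SFX ⊗ FX ⊗ FSX → FSX is an isomorphism, with inverse (F_0 ⊗ 1) ∘ (F e_X ⊗ 1) ∘ (f_2 ⊗ 1) ∘ (1 ⊗ d_{FX}) : FSX → SFX. -/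
open CategoryTheory MonoidalCategory CategoryTheory.Functor.LaxMonoidal
  CategoryTheory.Functor.OplaxMonoidal

universe v₁ v₂ u₁ u₂

section

variable {C : Type u₁} [Category.{v₁} C] [MonoidalCategory C]
variable {D : Type u₂} [Category.{v₂} D] [MonoidalCategory D]
variable (F : C ⥤ D) [F.LaxMonoidal] [F.OplaxMonoidal]
variable (SC : C → C) (dC : ∀ X : C, 𝟙_ C ⟶ X ⊗ SC X) (eC : ∀ X : C, SC X ⊗ X ⟶ 𝟙_ C)
variable (SD : D → D) (dD : ∀ X : D, 𝟙_ D ⟶ X ⊗ SD X) (eD : ∀ X : D, SD X ⊗ X ⟶ 𝟙_ D)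

/-- aux: pairing in D -/
def auxPairD
    (hD1 : ∀ X : D, (λ_ X).inv ≫ (dD X ⊗ₘ 𝟙 X) ≫ (α_ X (SD X) X).hom ≫
      (𝟙 X ⊗ₘ eD X) ≫ (ρ_ X).hom = 𝟙 X)
    (hD2 : ∀ X : D, (ρ_ (SD X)).inv ≫ (𝟙 (SD X) ⊗ₘ dD X) ≫ (α_ (SD X) X (SD X)).inv ≫
      (eD X ⊗ₘ 𝟙 (SD X)) ≫ (λ_ (SD X)).hom = 𝟙 (SD X))
    (X : D) : ExactPairing X (SD X) where
  coevaluation' := dD X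
  evaluation' := eD X
  coevaluation_evaluation' := by
    have h := hD2 X
    simp only [tensorHom_id, id_tensorHom] at h
    have := congrArg (fun g => (ρ_ (SD X)).hom ≫ g ≫ (λ_ (SD X)).inv) h
    simpa using this
  evaluation_coevaluation' := by
    have h := hD1 X
    simp only [tensorHom_id, id_tensorHom] at h
    have := congrArg (fun g => (λ_ X).hom ≫ g ≫ (ρ_ X).inv) h
    simpa using this


/-- aux: Frobenius pairing in D -/
def auxPairF
    (hC1 : ∀ X : C, (λ_ X).inv ≫ (dC X ⊗ₘ 𝟙 X) ≫ (α_ X (SC X) X).hom ≫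
      (𝟙 X ⊗ₘ eC X) ≫ (ρ_ X).hom = 𝟙 X)
    (hC2 : ∀ X : C, (ρ_ (SC X)).inv ≫ (𝟙 (SC X) ⊗ₘ dC X) ≫ (α_ (SC X) X (SC X)).inv ≫
      (eC X ⊗ₘ 𝟙 (SC X)) ≫ (λ_ (SC X)).hom = 𝟙 (SC X))
    (frob1 : ∀ X Y Z : C,
      μ F X (Y ⊗ Z) ≫ F.map (α_ X Y Z).inv ≫ δ F (X ⊗ Y) Z =
        (𝟙 (F.obj X) ⊗ₘ δ F Y Z) ≫ (α_ (F.obj X) (F.obj Y) (F.obj Z)).inv ≫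
          (μ F X Y ⊗ₘ 𝟙 (F.obj Z)))
    (frob2 : ∀ X Y Z : C,
      μ F (X ⊗ Y) Z ≫ F.map (α_ X Y Z).hom ≫ δ F X (Y ⊗ Z) =
        (δ F X Y ⊗ₘ 𝟙 (F.obj Z)) ≫ (α_ (F.obj X) (F.obj Y) (F.obj Z)).hom ≫
          (𝟙 (F.obj X) ⊗ₘ μ F Y Z))
    (X : C) : ExactPairing (F.obj X) (F.obj (SC X)) where
  coevaluation' := ε F ≫ F.map (dC X) ≫ δ F X (SC X)
  evaluation' := μ F (SC X) X ≫ F.map (eC X) ≫ η F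
  coevaluation_evaluation' := by
    have hf := frob1 (SC X) X (SC X)
    simp only [tensorHom_id, id_tensorHom] at hf
    have h1 : F.obj (SC X) ◁ ε F ≫ μ F (SC X) (𝟙_ C) =
        (ρ_ (F.obj (SC X))).hom ≫ F.map (ρ_ (SC X)).inv := by
      rw [Functor.LaxMonoidal.right_unitality (F := F) (SC X)]
      simp [← Functor.map_comp]
    have h2 : δ F (𝟙_ C) (SC X) ≫ η F ▷ F.obj (SC X) =
        F.map (λ_ (SC X)).hom ≫ (λ_ (F.obj (SC X))).inv := by
      rw [← cancel_mono (λ_ (F.obj (SC X))).hom]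
      simp
    have hC := hC2 X
    simp only [tensorHom_id, id_tensorHom] at hC
    calc F.obj (SC X) ◁ (ε F ≫ F.map (dC X) ≫ δ F X (SC X)) ≫
          (α_ _ _ _).inv ≫ (μ F (SC X) X ≫ F.map (eC X) ≫ η F) ▷ F.obj (SC X)
        = F.obj (SC X) ◁ ε F ≫ F.obj (SC X) ◁ F.map (dC X) ≫
            (F.obj (SC X) ◁ δ F X (SC X) ≫ (α_ _ _ _).inv ≫ μ F (SC X) X ▷ F.obj (SC X)) ≫
            F.map (eC X) ▷ F.obj (SC X) ≫ η F ▷ F.obj (SC X) := by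
          simp [MonoidalCategory.whiskerLeft_comp, comp_whiskerRight]
      _ = F.obj (SC X) ◁ ε F ≫ (F.obj (SC X) ◁ F.map (dC X) ≫ μ F (SC X) (X ⊗ SC X)) ≫
            F.map (α_ (SC X) X (SC X)).inv ≫
            (δ F (SC X ⊗ X) (SC X) ≫ F.map (eC X) ▷ F.obj (SC X)) ≫ η F ▷ F.obj (SC X) := by
          rw [← hf]; simp
      _ = (F.obj (SC X) ◁ ε F ≫ μ F (SC X) (𝟙_ C)) ≫ F.map (SC X ◁ dC X) ≫
            F.map (α_ (SC X) X (SC X)).inv ≫ F.map (eC X ▷ SC X) ≫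
            (δ F (𝟙_ C) (SC X) ≫ η F ▷ F.obj (SC X)) := by
          rw [μ_natural_right, δ_natural_left]; simp
      _ = (ρ_ (F.obj (SC X))).hom ≫ F.map ((ρ_ (SC X)).inv ≫ SC X ◁ dC X ≫
            (α_ (SC X) X (SC X)).inv ≫ eC X ▷ SC X ≫ (λ_ (SC X)).hom) ≫
            (λ_ (F.obj (SC X))).inv := by
          rw [h1, h2]; simp
      _ = (ρ_ (F.obj (SC X))).hom ≫ (λ_ (F.obj (SC X))).inv := by
          rw [hC]; simp
  evaluation_coevaluation' := by
    have hf := frob2 X (SC X) X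
    simp only [tensorHom_id, id_tensorHom] at hf
    have h1 : ε F ▷ F.obj X ≫ μ F (𝟙_ C) X =
        (λ_ (F.obj X)).hom ≫ F.map (λ_ X).inv := by
      rw [Functor.LaxMonoidal.left_unitality (F := F) X]
      simp [← Functor.map_comp]
    have h2 : δ F X (𝟙_ C) ≫ F.obj X ◁ η F =
        F.map (ρ_ X).hom ≫ (ρ_ (F.obj X)).inv := by
      rw [← cancel_mono (ρ_ (F.obj X)).hom]
      simp
    have hC := hC1 X
    simp only [tensorHom_id, id_tensorHom] at hC
    calc (ε F ≫ F.map (dC X) ≫ δ F X (SC X)) ▷ F.obj X ≫ (α_ _ _ _).hom ≫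
          F.obj X ◁ (μ F (SC X) X ≫ F.map (eC X) ≫ η F)
        = ε F ▷ F.obj X ≫ F.map (dC X) ▷ F.obj X ≫
            (δ F X (SC X) ▷ F.obj X ≫ (α_ _ _ _).hom ≫ F.obj X ◁ μ F (SC X) X) ≫
            F.obj X ◁ F.map (eC X) ≫ F.obj X ◁ η F := by
          simp [MonoidalCategory.whiskerLeft_comp, comp_whiskerRight]
      _ = (ε F ▷ F.obj X ≫ (F.map (dC X) ▷ F.obj X ≫ μ F (X ⊗ SC X) X)) ≫
            F.map (α_ X (SC X) X).hom ≫
            (δ F X (SC X ⊗ X) ≫ F.obj X ◁ F.map (eC X)) ≫ F.obj X ◁ η F := by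
          rw [← hf]; simp
      _ = (ε F ▷ F.obj X ≫ μ F (𝟙_ C) X) ≫ F.map (dC X ▷ X) ≫
            F.map (α_ X (SC X) X).hom ≫ F.map (X ◁ eC X) ≫
            (δ F X (𝟙_ C) ≫ F.obj X ◁ η F) := by
          rw [μ_natural_left, δ_natural_right]; simp
      _ = (λ_ (F.obj X)).hom ≫ F.map ((λ_ X).inv ≫ dC X ▷ X ≫
            (α_ X (SC X) X).hom ≫ X ◁ eC X ≫ (ρ_ X).hom) ≫ (ρ_ (F.obj X)).inv := by
          rw [h1, h2]; simp
      _ = (λ_ (F.obj X)).hom ≫ (ρ_ (F.obj X)).inv := by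
          rw [hC]; simp


/-- The canonical morphism `κ : S(FX) ⟶ F(SX)` associated to a Frobenius monoidal functor,
`κ = (e_{FX} ⊗ 1) ∘ (1 ⊗ F_2) ∘ (1 ⊗ F d_X) ∘ (1 ⊗ f_0)`. -/
noncomputable def kappa (X : C) : SD (F.obj X) ⟶ F.obj (SC X) :=
  (ρ_ (SD (F.obj X))).inv ≫
    (𝟙 (SD (F.obj X)) ⊗ₘ (ε F ≫ F.map (dC X) ≫ δ F X (SC X))) ≫
    (α_ (SD (F.obj X)) (F.obj X) (F.obj (SC X))).inv ≫
    (eD (F.obj X) ⊗ₘ 𝟙 (F.obj (SC X))) ≫ (λ_ (F.obj (SC X))).hom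

/-- The candidate inverse `(F_0 ⊗ 1) ∘ (F e_X ⊗ 1) ∘ (f_2 ⊗ 1) ∘ (1 ⊗ d_{FX})`. -/
noncomputable def kappaInv (X : C) : F.obj (SC X) ⟶ SD (F.obj X) :=
  (ρ_ (F.obj (SC X))).inv ≫
    (𝟙 (F.obj (SC X)) ⊗ₘ dD (F.obj X)) ≫
    (α_ (F.obj (SC X)) (F.obj X) (SD (F.obj X))).inv ≫
    ((μ F (SC X) X ≫ F.map (eC X) ≫ η F) ⊗ₘ 𝟙 (SD (F.obj X))) ≫ (λ_ (SD (F.obj X))).hom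

/-- For a Frobenius monoidal functor `F` between left autonomous categories, the canonical
natural transformation `κ : S(FX) ⟶ F(SX)` is an isomorphism, with explicit inverse
`(F_0 ⊗ 1) ∘ (F e_X ⊗ 1) ∘ (f_2 ⊗ 1) ∘ (1 ⊗ d_{FX})`. -/
theorem frobenius_kappa_isIso
    (hC1 : ∀ X : C, (λ_ X).inv ≫ (dC X ⊗ₘ 𝟙 X) ≫ (α_ X (SC X) X).hom ≫
      (𝟙 X ⊗ₘ eC X) ≫ (ρ_ X).hom = 𝟙 X)
    (hC2 : ∀ X : C, (ρ_ (SC X)).inv ≫ (𝟙 (SC X) ⊗ₘ dC X) ≫ (α_ (SC X) X (SC X)).inv ≫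
      (eC X ⊗ₘ 𝟙 (SC X)) ≫ (λ_ (SC X)).hom = 𝟙 (SC X))
    (hD1 : ∀ X : D, (λ_ X).inv ≫ (dD X ⊗ₘ 𝟙 X) ≫ (α_ X (SD X) X).hom ≫
      (𝟙 X ⊗ₘ eD X) ≫ (ρ_ X).hom = 𝟙 X)
    (hD2 : ∀ X : D, (ρ_ (SD X)).inv ≫ (𝟙 (SD X) ⊗ₘ dD X) ≫ (α_ (SD X) X (SD X)).inv ≫
      (eD X ⊗ₘ 𝟙 (SD X)) ≫ (λ_ (SD X)).hom = 𝟙 (SD X))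
    (frob1 : ∀ X Y Z : C,
      μ F X (Y ⊗ Z) ≫ F.map (α_ X Y Z).inv ≫ δ F (X ⊗ Y) Z =
        (𝟙 (F.obj X) ⊗ₘ δ F Y Z) ≫ (α_ (F.obj X) (F.obj Y) (F.obj Z)).inv ≫
          (μ F X Y ⊗ₘ 𝟙 (F.obj Z)))
    (frob2 : ∀ X Y Z : C,
      μ F (X ⊗ Y) Z ≫ F.map (α_ X Y Z).hom ≫ δ F X (Y ⊗ Z) =
        (δ F X Y ⊗ₘ 𝟙 (F.obj Z)) ≫ (α_ (F.obj X) (F.obj Y) (F.obj Z)).hom ≫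
          (𝟙 (F.obj X) ⊗ₘ μ F Y Z))
    (X : C) :
    kappa F SC dC SD eD X ≫ kappaInv F SC eC SD dD X = 𝟙 (SD (F.obj X)) ∧
    kappaInv F SC eC SD dD X ≫ kappa F SC dC SD eD X = 𝟙 (F.obj (SC X)) := by
  have hk : kappa F SC dC SD eD X =
      (rightDualIso (auxPairD SD dD eD hD1 hD2 (F.obj X))
        (auxPairF F SC dC eC hC1 hC2 frob1 frob2 X)).hom := by
    dsimp only [kappa, rightDualIso, rightAdjointMate, ExactPairing.coevaluation,
      ExactPairing.evaluation, auxPairD, auxPairF]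
    unfold_projs
    simp [tensorHom_id, id_tensorHom, auxPairD, auxPairF]
  have hki : kappaInv F SC eC SD dD X =
      (rightDualIso (auxPairD SD dD eD hD1 hD2 (F.obj X))
        (auxPairF F SC dC eC hC1 hC2 frob1 frob2 X)).inv := by
    dsimp only [kappaInv, rightDualIso, rightAdjointMate, ExactPairing.coevaluation,
      ExactPairing.evaluation, auxPairD, auxPairF]
    unfold_projs
    simp [tensorHom_id, id_tensorHom, auxPairD, auxPairF]
  constructor
  · rw [hk, hki, Iso.hom_inv_id]
  · rw [hki, hk, Iso.inv_hom_id]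

end
end

section
/- Let (R, L) : C → D be a linear functor between monoidal categories. Then L1 is a left dual of R1, with unit ν^l_R ∘ r_0 : 1 → R1 ⊗ L1 and counit L_0 ∘ ν^l_L : L1 ⊗ R1 → 1; i.e., these morphisms satisfy the triangle identities exhibiting L1 as left dual of R1. -/
open CategoryTheory MonoidalCategory

universe v₁ v₂ u₁ u₂

variable {C : Type u₁} [Category.{v₁} C] [MonoidalCategory C]
variable {D : Type u₂} [Category.{v₂} D] [MonoidalCategory D]

/-- The Cockett–Seely axioms for a linearly distributive (linear) functor `(R, L)` between
monoidal categories: `R` is lax monoidal, `L` is oplax monoidal, and the four (co)strengths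
`νrR, νlR, νrL, νlL` satisfy the linear functor coherence conditions. -/
structure IsLinearFunctor (R L : C ⥤ D)
    (r2 : ∀ X Y : C, R.obj X ⊗ R.obj Y ⟶ R.obj (X ⊗ Y)) (r0 : 𝟙_ D ⟶ R.obj (𝟙_ C))
    (L2 : ∀ X Y : C, L.obj (X ⊗ Y) ⟶ L.obj X ⊗ L.obj Y) (L0 : L.obj (𝟙_ C) ⟶ 𝟙_ D)
    (νrR : ∀ X Y : C, R.obj (X ⊗ Y) ⟶ L.obj X ⊗ R.obj Y)
    (νlR : ∀ X Y : C, R.obj (X ⊗ Y) ⟶ R.obj X ⊗ L.obj Y)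
    (νrL : ∀ X Y : C, R.obj X ⊗ L.obj Y ⟶ L.obj (X ⊗ Y))
    (νlL : ∀ X Y : C, L.obj X ⊗ R.obj Y ⟶ L.obj (X ⊗ Y)) : Prop where
  r2_natural : ∀ {X Y X' Y' : C} (f : X ⟶ X') (g : Y ⟶ Y'),
    (R.map f ⊗ₘ R.map g) ≫ r2 X' Y' = r2 X Y ≫ R.map (f ⊗ₘ g)
  L2_natural : ∀ {X Y X' Y' : C} (f : X ⟶ X') (g : Y ⟶ Y'),
    L2 X Y ≫ (L.map f ⊗ₘ L.map g) = L.map (f ⊗ₘ g) ≫ L2 X' Y'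
  νrR_natural : ∀ {X Y X' Y' : C} (f : X ⟶ X') (g : Y ⟶ Y'),
    νrR X Y ≫ (L.map f ⊗ₘ R.map g) = R.map (f ⊗ₘ g) ≫ νrR X' Y'
  νlR_natural : ∀ {X Y X' Y' : C} (f : X ⟶ X') (g : Y ⟶ Y'),
    νlR X Y ≫ (R.map f ⊗ₘ L.map g) = R.map (f ⊗ₘ g) ≫ νlR X' Y'
  νrL_natural : ∀ {X Y X' Y' : C} (f : X ⟶ X') (g : Y ⟶ Y'),
    (R.map f ⊗ₘ L.map g) ≫ νrL X' Y' = νrL X Y ≫ L.map (f ⊗ₘ g)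
  νlL_natural : ∀ {X Y X' Y' : C} (f : X ⟶ X') (g : Y ⟶ Y'),
    (L.map f ⊗ₘ R.map g) ≫ νlL X' Y' = νlL X Y ≫ L.map (f ⊗ₘ g)
  r2_associativity : ∀ X Y Z : C,
    (r2 X Y ⊗ₘ 𝟙 (R.obj Z)) ≫ r2 (X ⊗ Y) Z ≫ R.map (α_ X Y Z).hom =
      (α_ (R.obj X) (R.obj Y) (R.obj Z)).hom ≫ (𝟙 (R.obj X) ⊗ₘ r2 Y Z) ≫ r2 X (Y ⊗ Z)
  r2_left_unit : ∀ X : C,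
    (r0 ⊗ₘ 𝟙 (R.obj X)) ≫ r2 (𝟙_ C) X ≫ R.map (λ_ X).hom = (λ_ (R.obj X)).hom
  r2_right_unit : ∀ X : C,
    (𝟙 (R.obj X) ⊗ₘ r0) ≫ r2 X (𝟙_ C) ≫ R.map (ρ_ X).hom = (ρ_ (R.obj X)).hom
  L2_associativity : ∀ X Y Z : C,
    L2 (X ⊗ Y) Z ≫ (L2 X Y ⊗ₘ 𝟙 (L.obj Z)) ≫ (α_ (L.obj X) (L.obj Y) (L.obj Z)).hom =
      L.map (α_ X Y Z).hom ≫ L2 X (Y ⊗ Z) ≫ (𝟙 (L.obj X) ⊗ₘ L2 Y Z)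
  L2_left_unit : ∀ X : C,
    L.map (λ_ X).inv ≫ L2 (𝟙_ C) X ≫ (L0 ⊗ₘ 𝟙 (L.obj X)) = (λ_ (L.obj X)).inv
  L2_right_unit : ∀ X : C,
    L.map (ρ_ X).inv ≫ L2 X (𝟙_ C) ≫ (𝟙 (L.obj X) ⊗ₘ L0) = (ρ_ (L.obj X)).inv
  lf1a : ∀ X : C,
    νrR (𝟙_ C) X ≫ (L0 ⊗ₘ 𝟙 (R.obj X)) ≫ (λ_ (R.obj X)).hom = R.map (λ_ X).hom
  lf1b : ∀ X : C,
    νlR X (𝟙_ C) ≫ (𝟙 (R.obj X) ⊗ₘ L0) ≫ (ρ_ (R.obj X)).hom = R.map (ρ_ X).hom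
  lf1c : ∀ X : C,
    (λ_ (L.obj X)).inv ≫ (r0 ⊗ₘ 𝟙 (L.obj X)) ≫ νrL (𝟙_ C) X = L.map (λ_ X).inv
  lf1d : ∀ X : C,
    (ρ_ (L.obj X)).inv ≫ (𝟙 (L.obj X) ⊗ₘ r0) ≫ νlL X (𝟙_ C) = L.map (ρ_ X).inv
  lf2a : ∀ X Y Z : C,
    R.map (α_ X Y Z).hom ≫ νrR X (Y ⊗ Z) ≫ (𝟙 (L.obj X) ⊗ₘ νrR Y Z) =
      νrR (X ⊗ Y) Z ≫ (L2 X Y ⊗ₘ 𝟙 (R.obj Z)) ≫ (α_ (L.obj X) (L.obj Y) (R.obj Z)).hom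
  lf2b : ∀ X Y Z : C,
    νlR (X ⊗ Y) Z ≫ (νlR X Y ⊗ₘ 𝟙 (L.obj Z)) ≫ (α_ (R.obj X) (L.obj Y) (L.obj Z)).hom =
      R.map (α_ X Y Z).hom ≫ νlR X (Y ⊗ Z) ≫ (𝟙 (R.obj X) ⊗ₘ L2 Y Z)
  lf2c : ∀ X Y Z : C,
    (r2 X Y ⊗ₘ 𝟙 (L.obj Z)) ≫ νrL (X ⊗ Y) Z =
      (α_ (R.obj X) (R.obj Y) (L.obj Z)).hom ≫ (𝟙 (R.obj X) ⊗ₘ νrL Y Z) ≫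
        νrL X (Y ⊗ Z) ≫ L.map (α_ X Y Z).inv
  lf2d : ∀ X Y Z : C,
    (𝟙 (L.obj X) ⊗ₘ r2 Y Z) ≫ νlL X (Y ⊗ Z) =
      (α_ (L.obj X) (R.obj Y) (R.obj Z)).inv ≫ (νlL X Y ⊗ₘ 𝟙 (R.obj Z)) ≫
        νlL (X ⊗ Y) Z ≫ L.map (α_ X Y Z).hom
  lf3a : ∀ X Y Z : C,
    R.map (α_ X Y Z).hom ≫ νrR X (Y ⊗ Z) ≫ (𝟙 (L.obj X) ⊗ₘ νlR Y Z) =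
      νlR (X ⊗ Y) Z ≫ (νrR X Y ⊗ₘ 𝟙 (L.obj Z)) ≫ (α_ (L.obj X) (R.obj Y) (L.obj Z)).hom
  lf3b : ∀ X Y Z : C,
    (α_ (R.obj X) (L.obj Y) (R.obj Z)).hom ≫ (𝟙 (R.obj X) ⊗ₘ νlL Y Z) ≫ νrL X (Y ⊗ Z) =
      (νrL X Y ⊗ₘ 𝟙 (R.obj Z)) ≫ νlL (X ⊗ Y) Z ≫ L.map (α_ X Y Z).hom
  lf4a : ∀ X Y Z : C,
    (𝟙 (R.obj X) ⊗ₘ νrR Y Z) ≫ (α_ (R.obj X) (L.obj Y) (R.obj Z)).inv ≫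
        (νrL X Y ⊗ₘ 𝟙 (R.obj Z)) =
      r2 X (Y ⊗ Z) ≫ R.map (α_ X Y Z).inv ≫ νrR (X ⊗ Y) Z
  lf4b : ∀ X Y Z : C,
    (νlR X Y ⊗ₘ 𝟙 (R.obj Z)) ≫ (α_ (R.obj X) (L.obj Y) (R.obj Z)).hom ≫
        (𝟙 (R.obj X) ⊗ₘ νlL Y Z) =
      r2 (X ⊗ Y) Z ≫ R.map (α_ X Y Z).hom ≫ νlR X (Y ⊗ Z)
  lf4c : ∀ X Y Z : C,
    (νrR X Y ⊗ₘ 𝟙 (L.obj Z)) ≫ (α_ (L.obj X) (R.obj Y) (L.obj Z)).hom ≫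
        (𝟙 (L.obj X) ⊗ₘ νrL Y Z) =
      νrL (X ⊗ Y) Z ≫ L.map (α_ X Y Z).hom ≫ L2 X (Y ⊗ Z)
  lf4d : ∀ X Y Z : C,
    (𝟙 (L.obj X) ⊗ₘ νlR Y Z) ≫ (α_ (L.obj X) (R.obj Y) (L.obj Z)).inv ≫
        (νlL X Y ⊗ₘ 𝟙 (L.obj Z)) =
      νlL X (Y ⊗ Z) ≫ L.map (α_ X Y Z).inv ≫ L2 (X ⊗ Y) Z
  lf5a : ∀ X Y Z : C,
    (νrR X Y ⊗ₘ 𝟙 (R.obj Z)) ≫ (α_ (L.obj X) (R.obj Y) (R.obj Z)).hom ≫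
        (𝟙 (L.obj X) ⊗ₘ r2 Y Z) =
      r2 (X ⊗ Y) Z ≫ R.map (α_ X Y Z).hom ≫ νrR X (Y ⊗ Z)
  lf5b : ∀ X Y Z : C,
    (𝟙 (R.obj X) ⊗ₘ νlR Y Z) ≫ (α_ (R.obj X) (R.obj Y) (L.obj Z)).inv ≫
        (r2 X Y ⊗ₘ 𝟙 (L.obj Z)) =
      r2 X (Y ⊗ Z) ≫ R.map (α_ X Y Z).inv ≫ νlR (X ⊗ Y) Z
  lf5c : ∀ X Y Z : C,
    (𝟙 (R.obj X) ⊗ₘ L2 Y Z) ≫ (α_ (R.obj X) (L.obj Y) (L.obj Z)).inv ≫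
        (νrL X Y ⊗ₘ 𝟙 (L.obj Z)) =
      νrL X (Y ⊗ Z) ≫ L.map (α_ X Y Z).inv ≫ L2 (X ⊗ Y) Z
  lf5d : ∀ X Y Z : C,
    (L2 X Y ⊗ₘ 𝟙 (R.obj Z)) ≫ (α_ (L.obj X) (L.obj Y) (R.obj Z)).hom ≫
        (𝟙 (L.obj X) ⊗ₘ νlL Y Z) =
      νlL (X ⊗ Y) Z ≫ L.map (α_ X Y Z).hom ≫ L2 X (Y ⊗ Z)

/-- For a linear functor `(R, L)` between monoidal categories, `L1` is a left dual of `R1`,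
with unit `ν^l_R ∘ r₀` and counit `L₀ ∘ ν^l_L`. -/
theorem linearFunctor_unit_left_dual
    {R L : C ⥤ D}
    {r2 : ∀ X Y : C, R.obj X ⊗ R.obj Y ⟶ R.obj (X ⊗ Y)} {r0 : 𝟙_ D ⟶ R.obj (𝟙_ C)}
    {L2 : ∀ X Y : C, L.obj (X ⊗ Y) ⟶ L.obj X ⊗ L.obj Y} {L0 : L.obj (𝟙_ C) ⟶ 𝟙_ D}
    {νrR : ∀ X Y : C, R.obj (X ⊗ Y) ⟶ L.obj X ⊗ R.obj Y}
    {νlR : ∀ X Y : C, R.obj (X ⊗ Y) ⟶ R.obj X ⊗ L.obj Y}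
    {νrL : ∀ X Y : C, R.obj X ⊗ L.obj Y ⟶ L.obj (X ⊗ Y)}
    {νlL : ∀ X Y : C, L.obj X ⊗ R.obj Y ⟶ L.obj (X ⊗ Y)}
    (h : IsLinearFunctor R L r2 r0 L2 L0 νrR νlR νrL νlL) :
    ((λ_ (R.obj (𝟙_ C))).inv ≫
      ((r0 ≫ R.map (λ_ (𝟙_ C)).inv ≫ νlR (𝟙_ C) (𝟙_ C)) ⊗ₘ 𝟙 (R.obj (𝟙_ C))) ≫
      (α_ (R.obj (𝟙_ C)) (L.obj (𝟙_ C)) (R.obj (𝟙_ C))).hom ≫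
      (𝟙 (R.obj (𝟙_ C)) ⊗ₘ (νlL (𝟙_ C) (𝟙_ C) ≫ L.map (λ_ (𝟙_ C)).hom ≫ L0)) ≫
      (ρ_ (R.obj (𝟙_ C))).hom = 𝟙 (R.obj (𝟙_ C))) ∧
    ((ρ_ (L.obj (𝟙_ C))).inv ≫
      (𝟙 (L.obj (𝟙_ C)) ⊗ₘ (r0 ≫ R.map (λ_ (𝟙_ C)).inv ≫ νlR (𝟙_ C) (𝟙_ C))) ≫
      (α_ (L.obj (𝟙_ C)) (R.obj (𝟙_ C)) (L.obj (𝟙_ C))).inv ≫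
      ((νlL (𝟙_ C) (𝟙_ C) ≫ L.map (λ_ (𝟙_ C)).hom ≫ L0) ⊗ₘ 𝟙 (L.obj (𝟙_ C))) ≫
      (λ_ (L.obj (𝟙_ C))).hom = 𝟙 (L.obj (𝟙_ C))) := by
  constructor
  · -- first triangle
    rw [comp_tensor_id, comp_tensor_id, id_tensor_comp, id_tensor_comp]
    slice_lhs 4 6 => rw [h.lf4b]
    have hr2 : (R.map (λ_ (𝟙_ C)).inv ⊗ₘ 𝟙 (R.obj (𝟙_ C))) ≫ r2 (𝟙_ C ⊗ 𝟙_ C) (𝟙_ C) =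
        r2 (𝟙_ C) (𝟙_ C) ≫ R.map ((λ_ (𝟙_ C)).inv ⊗ₘ 𝟙 (𝟙_ C)) := by
      have := h.r2_natural (λ_ (𝟙_ C)).inv (𝟙 (𝟙_ C))
      simpa using this
    slice_lhs 3 4 => rw [hr2]
    have hν : νlR (𝟙_ C) (𝟙_ C ⊗ 𝟙_ C) ≫ (𝟙 (R.obj (𝟙_ C)) ⊗ₘ L.map (λ_ (𝟙_ C)).hom) =
        R.map (𝟙 (𝟙_ C) ⊗ₘ (λ_ (𝟙_ C)).hom) ≫ νlR (𝟙_ C) (𝟙_ C) := by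
      have := h.νlR_natural (𝟙 (𝟙_ C)) (λ_ (𝟙_ C)).hom
      simpa using this
    slice_lhs 6 7 => rw [hν]
    have hcoh : ((λ_ (𝟙_ C)).inv ⊗ₘ 𝟙 (𝟙_ C)) ≫ (α_ (𝟙_ C) (𝟙_ C) (𝟙_ C)).hom ≫
        (𝟙 (𝟙_ C) ⊗ₘ (λ_ (𝟙_ C)).hom) = 𝟙 (𝟙_ C ⊗ 𝟙_ C) := by
      coherence
    slice_lhs 4 6 => rw [← R.map_comp, ← R.map_comp, hcoh, R.map_id]
    rw [Category.id_comp]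
    have hb : νlR (𝟙_ C) (𝟙_ C) ≫ (𝟙 (R.obj (𝟙_ C)) ⊗ₘ L0) =
        R.map (ρ_ (𝟙_ C)).hom ≫ (ρ_ (R.obj (𝟙_ C))).inv := by
      rw [← h.lf1b (𝟙_ C)]; simp
    slice_lhs 4 5 => rw [hb]
    have ha : (r0 ⊗ₘ 𝟙 (R.obj (𝟙_ C))) ≫ r2 (𝟙_ C) (𝟙_ C) =
        (λ_ (R.obj (𝟙_ C))).hom ≫ R.map (λ_ (𝟙_ C)).inv := by
      rw [← h.r2_left_unit (𝟙_ C)]; simp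
    slice_lhs 2 3 => rw [ha]
    simp [← R.map_comp, ← unitors_equal]
  · -- second triangle
    rw [id_tensor_comp, id_tensor_comp, comp_tensor_id, comp_tensor_id]
    slice_lhs 4 6 => rw [h.lf4d]
    have hν : (𝟙 (L.obj (𝟙_ C)) ⊗ₘ R.map (λ_ (𝟙_ C)).inv) ≫ νlL (𝟙_ C) (𝟙_ C ⊗ 𝟙_ C) =
        νlL (𝟙_ C) (𝟙_ C) ≫ L.map (𝟙 (𝟙_ C) ⊗ₘ (λ_ (𝟙_ C)).inv) := by
      have := h.νlL_natural (𝟙 (𝟙_ C)) (λ_ (𝟙_ C)).inv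
      simpa using this
    slice_lhs 3 4 => rw [hν]
    have hL2 : L2 (𝟙_ C ⊗ 𝟙_ C) (𝟙_ C) ≫ (L.map (λ_ (𝟙_ C)).hom ⊗ₘ 𝟙 (L.obj (𝟙_ C))) =
        L.map ((λ_ (𝟙_ C)).hom ⊗ₘ 𝟙 (𝟙_ C)) ≫ L2 (𝟙_ C) (𝟙_ C) := by
      have := h.L2_natural (λ_ (𝟙_ C)).hom (𝟙 (𝟙_ C))
      simpa using this
    slice_lhs 6 7 => rw [hL2]
    have hcoh : (𝟙 (𝟙_ C) ⊗ₘ (λ_ (𝟙_ C)).inv) ≫ (α_ (𝟙_ C) (𝟙_ C) (𝟙_ C)).inv ≫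
        ((λ_ (𝟙_ C)).hom ⊗ₘ 𝟙 (𝟙_ C)) = 𝟙 (𝟙_ C ⊗ 𝟙_ C) := by
      coherence
    slice_lhs 4 6 => rw [← L.map_comp, ← L.map_comp, hcoh, L.map_id]
    rw [Category.id_comp]
    have hd : (𝟙 (L.obj (𝟙_ C)) ⊗ₘ r0) ≫ νlL (𝟙_ C) (𝟙_ C) =
        (ρ_ (L.obj (𝟙_ C))).hom ≫ L.map (ρ_ (𝟙_ C)).inv := by
      rw [← h.lf1d (𝟙_ C)]; simp
    slice_lhs 2 3 => rw [hd]
    have hl : L2 (𝟙_ C) (𝟙_ C) ≫ (L0 ⊗ₘ 𝟙 (L.obj (𝟙_ C))) =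
        L.map (λ_ (𝟙_ C)).hom ≫ (λ_ (L.obj (𝟙_ C))).inv := by
      rw [← h.L2_left_unit (𝟙_ C)]; simp
    slice_lhs 4 5 => rw [hl]
    simp [← L.map_comp, unitors_equal]
end

section
/- Let (R, L) : C → D be a linear functor between monoidal categories. Then L1 is a right dual of R1, with unit ν^r_R ∘ r_0 : 1 → L1 ⊗ R1 and counit L_0 ∘ ν^r_L : R1 ⊗ L1 → 1 satisfying the triangle identities for a right dual. -/
open CategoryTheory MonoidalCategory

universe v₁ v₂ u₁ u₂

variable {C : Type u₁} [Category.{v₁} C] [MonoidalCategory C]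
variable {D : Type u₂} [Category.{v₂} D] [MonoidalCategory D]

set_option maxHeartbeats 1000000 in
/-- For a linear functor `(R, L)` between monoidal categories, `L1` is a right dual of `R1`,
with unit `ν^r_R ∘ r₀ : 1 ⟶ L1 ⊗ R1` and counit `L₀ ∘ ν^r_L : R1 ⊗ L1 ⟶ 1`. -/
theorem linearFunctor_unit_right_dual
    {R L : C ⥤ D}
    {r2 : ∀ X Y : C, R.obj X ⊗ R.obj Y ⟶ R.obj (X ⊗ Y)} {r0 : 𝟙_ D ⟶ R.obj (𝟙_ C)}
    {L2 : ∀ X Y : C, L.obj (X ⊗ Y) ⟶ L.obj X ⊗ L.obj Y} {L0 : L.obj (𝟙_ C) ⟶ 𝟙_ D}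
    {νrR : ∀ X Y : C, R.obj (X ⊗ Y) ⟶ L.obj X ⊗ R.obj Y}
    {νlR : ∀ X Y : C, R.obj (X ⊗ Y) ⟶ R.obj X ⊗ L.obj Y}
    {νrL : ∀ X Y : C, R.obj X ⊗ L.obj Y ⟶ L.obj (X ⊗ Y)}
    {νlL : ∀ X Y : C, L.obj X ⊗ R.obj Y ⟶ L.obj (X ⊗ Y)}
    (h : IsLinearFunctor R L r2 r0 L2 L0 νrR νlR νrL νlL) :
    ((ρ_ (R.obj (𝟙_ C))).inv ≫
      (𝟙 (R.obj (𝟙_ C)) ⊗ₘ (r0 ≫ R.map (λ_ (𝟙_ C)).inv ≫ νrR (𝟙_ C) (𝟙_ C))) ≫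
      (α_ (R.obj (𝟙_ C)) (L.obj (𝟙_ C)) (R.obj (𝟙_ C))).inv ≫
      ((νrL (𝟙_ C) (𝟙_ C) ≫ L.map (λ_ (𝟙_ C)).hom ≫ L0) ⊗ₘ 𝟙 (R.obj (𝟙_ C))) ≫
      (λ_ (R.obj (𝟙_ C))).hom = 𝟙 (R.obj (𝟙_ C))) ∧
    ((λ_ (L.obj (𝟙_ C))).inv ≫
      ((r0 ≫ R.map (λ_ (𝟙_ C)).inv ≫ νrR (𝟙_ C) (𝟙_ C)) ⊗ₘ 𝟙 (L.obj (𝟙_ C))) ≫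
      (α_ (L.obj (𝟙_ C)) (R.obj (𝟙_ C)) (L.obj (𝟙_ C))).hom ≫
      (𝟙 (L.obj (𝟙_ C)) ⊗ₘ (νrL (𝟙_ C) (𝟙_ C) ≫ L.map (λ_ (𝟙_ C)).hom ≫ L0)) ≫
      (ρ_ (L.obj (𝟙_ C))).hom = 𝟙 (L.obj (𝟙_ C))) := by
  obtain ⟨r2_natural, L2_natural, νrR_natural, νlR_natural, νrL_natural, νlL_natural,
    r2_associativity, r2_left_unit, r2_right_unit, L2_associativity, L2_left_unit,
    L2_right_unit, lf1a, lf1b, lf1c, lf1d, lf2a, lf2b, lf2c, lf2d, lf3a, lf3b,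
    lf4a, lf4b, lf4c, lf4d, lf5a, lf5b, lf5c, lf5d⟩ := h
  have n1 : νrR (𝟙_ C ⊗ 𝟙_ C) (𝟙_ C) ≫ (L.map (λ_ (𝟙_ C)).hom ⊗ₘ 𝟙 (R.obj (𝟙_ C))) =
      R.map ((λ_ (𝟙_ C)).hom ⊗ₘ 𝟙 (𝟙_ C)) ≫ νrR (𝟙_ C) (𝟙_ C) := by
    simpa using νrR_natural (λ_ (𝟙_ C)).hom (𝟙 (𝟙_ C))
  have n2 : (𝟙 (R.obj (𝟙_ C)) ⊗ₘ R.map (λ_ (𝟙_ C)).inv) ≫ r2 (𝟙_ C) (𝟙_ C ⊗ 𝟙_ C) =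
      r2 (𝟙_ C) (𝟙_ C) ≫ R.map (𝟙 (𝟙_ C) ⊗ₘ (λ_ (𝟙_ C)).inv) := by
    simpa using r2_natural (𝟙 (𝟙_ C)) (λ_ (𝟙_ C)).inv
  have n3 : L2 (𝟙_ C) (𝟙_ C ⊗ 𝟙_ C) ≫ (𝟙 (L.obj (𝟙_ C)) ⊗ₘ L.map (λ_ (𝟙_ C)).hom) =
      L.map (𝟙 (𝟙_ C) ⊗ₘ (λ_ (𝟙_ C)).hom) ≫ L2 (𝟙_ C) (𝟙_ C) := by
    simpa using L2_natural (𝟙 (𝟙_ C)) (λ_ (𝟙_ C)).hom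
  have n4 : (R.map (λ_ (𝟙_ C)).inv ⊗ₘ 𝟙 (L.obj (𝟙_ C))) ≫ νrL (𝟙_ C ⊗ 𝟙_ C) (𝟙_ C) =
      νrL (𝟙_ C) (𝟙_ C) ≫ L.map ((λ_ (𝟙_ C)).inv ⊗ₘ 𝟙 (𝟙_ C)) := by
    simpa using νrL_natural (λ_ (𝟙_ C)).inv (𝟙 (𝟙_ C))
  have coh1 : (𝟙 (𝟙_ C) ⊗ₘ (λ_ (𝟙_ C)).inv) ≫ (α_ (𝟙_ C) (𝟙_ C) (𝟙_ C)).inv ≫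
      ((λ_ (𝟙_ C)).hom ⊗ₘ 𝟙 (𝟙_ C)) ≫ (λ_ (𝟙_ C)).hom = (ρ_ (𝟙_ C)).hom := by
    coherence
  have coh2 : (λ_ (𝟙_ C)).inv ≫ ((λ_ (𝟙_ C)).inv ⊗ₘ 𝟙 (𝟙_ C)) ≫
      (α_ (𝟙_ C) (𝟙_ C) (𝟙_ C)).hom ≫ (𝟙 (𝟙_ C) ⊗ₘ (λ_ (𝟙_ C)).hom) ≫ (ρ_ (𝟙_ C)).hom
      = 𝟙 (𝟙_ C) := by
    coherence
  constructor
  · calc (ρ_ (R.obj (𝟙_ C))).inv ≫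
        (𝟙 (R.obj (𝟙_ C)) ⊗ₘ (r0 ≫ R.map (λ_ (𝟙_ C)).inv ≫ νrR (𝟙_ C) (𝟙_ C))) ≫
        (α_ (R.obj (𝟙_ C)) (L.obj (𝟙_ C)) (R.obj (𝟙_ C))).inv ≫
        ((νrL (𝟙_ C) (𝟙_ C) ≫ L.map (λ_ (𝟙_ C)).hom ≫ L0) ⊗ₘ 𝟙 (R.obj (𝟙_ C))) ≫
        (λ_ (R.obj (𝟙_ C))).hom
      = (ρ_ (R.obj (𝟙_ C))).inv ≫ (𝟙 (R.obj (𝟙_ C)) ⊗ₘ r0) ≫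
        (𝟙 (R.obj (𝟙_ C)) ⊗ₘ R.map (λ_ (𝟙_ C)).inv) ≫
        ((𝟙 (R.obj (𝟙_ C)) ⊗ₘ νrR (𝟙_ C) (𝟙_ C)) ≫
        (α_ (R.obj (𝟙_ C)) (L.obj (𝟙_ C)) (R.obj (𝟙_ C))).inv ≫
        (νrL (𝟙_ C) (𝟙_ C) ⊗ₘ 𝟙 (R.obj (𝟙_ C)))) ≫
        (L.map (λ_ (𝟙_ C)).hom ⊗ₘ 𝟙 (R.obj (𝟙_ C))) ≫
        (L0 ⊗ₘ 𝟙 (R.obj (𝟙_ C))) ≫ (λ_ (R.obj (𝟙_ C))).hom := by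
          simp only [id_tensor_comp, comp_tensor_id, Category.assoc]
    _ = (ρ_ (R.obj (𝟙_ C))).inv ≫ (𝟙 (R.obj (𝟙_ C)) ⊗ₘ r0) ≫
        ((𝟙 (R.obj (𝟙_ C)) ⊗ₘ R.map (λ_ (𝟙_ C)).inv) ≫ r2 (𝟙_ C) (𝟙_ C ⊗ 𝟙_ C)) ≫
        R.map (α_ (𝟙_ C) (𝟙_ C) (𝟙_ C)).inv ≫
        (νrR (𝟙_ C ⊗ 𝟙_ C) (𝟙_ C) ≫ (L.map (λ_ (𝟙_ C)).hom ⊗ₘ 𝟙 (R.obj (𝟙_ C)))) ≫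
        (L0 ⊗ₘ 𝟙 (R.obj (𝟙_ C))) ≫ (λ_ (R.obj (𝟙_ C))).hom := by
          rw [lf4a]; simp only [Category.assoc]
    _ = (ρ_ (R.obj (𝟙_ C))).inv ≫ (𝟙 (R.obj (𝟙_ C)) ⊗ₘ r0) ≫ r2 (𝟙_ C) (𝟙_ C) ≫
        R.map (𝟙 (𝟙_ C) ⊗ₘ (λ_ (𝟙_ C)).inv) ≫ R.map (α_ (𝟙_ C) (𝟙_ C) (𝟙_ C)).inv ≫
        R.map ((λ_ (𝟙_ C)).hom ⊗ₘ 𝟙 (𝟙_ C)) ≫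
        (νrR (𝟙_ C) (𝟙_ C) ≫ (L0 ⊗ₘ 𝟙 (R.obj (𝟙_ C))) ≫ (λ_ (R.obj (𝟙_ C))).hom) := by
          rw [n1, n2]; simp only [Category.assoc, R.map_comp]
    _ = (ρ_ (R.obj (𝟙_ C))).inv ≫ (𝟙 (R.obj (𝟙_ C)) ⊗ₘ r0) ≫ r2 (𝟙_ C) (𝟙_ C) ≫
        R.map ((𝟙 (𝟙_ C) ⊗ₘ (λ_ (𝟙_ C)).inv) ≫ (α_ (𝟙_ C) (𝟙_ C) (𝟙_ C)).inv ≫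
          ((λ_ (𝟙_ C)).hom ⊗ₘ 𝟙 (𝟙_ C)) ≫ (λ_ (𝟙_ C)).hom) := by
          rw [lf1a]; simp only [Category.assoc, R.map_comp]
    _ = (ρ_ (R.obj (𝟙_ C))).inv ≫ (𝟙 (R.obj (𝟙_ C)) ⊗ₘ r0) ≫ r2 (𝟙_ C) (𝟙_ C) ≫
        R.map (ρ_ (𝟙_ C)).hom := by rw [coh1]
    _ = 𝟙 (R.obj (𝟙_ C)) := by rw [r2_right_unit]; simp
  · have u1 : L2 (𝟙_ C) (𝟙_ C) ≫ (𝟙 (L.obj (𝟙_ C)) ⊗ₘ L0) ≫ (ρ_ (L.obj (𝟙_ C))).hom =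
        L.map (ρ_ (𝟙_ C)).hom := by
      have := L2_right_unit (𝟙_ C)
      rw [← cancel_epi (L.map (ρ_ (𝟙_ C)).inv)]
      simp only [← Category.assoc] at this ⊢
      rw [this]
      simp [← L.map_comp]
    calc (λ_ (L.obj (𝟙_ C))).inv ≫
        ((r0 ≫ R.map (λ_ (𝟙_ C)).inv ≫ νrR (𝟙_ C) (𝟙_ C)) ⊗ₘ 𝟙 (L.obj (𝟙_ C))) ≫
        (α_ (L.obj (𝟙_ C)) (R.obj (𝟙_ C)) (L.obj (𝟙_ C))).hom ≫
        (𝟙 (L.obj (𝟙_ C)) ⊗ₘ (νrL (𝟙_ C) (𝟙_ C) ≫ L.map (λ_ (𝟙_ C)).hom ≫ L0)) ≫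
        (ρ_ (L.obj (𝟙_ C))).hom
      = (λ_ (L.obj (𝟙_ C))).inv ≫ (r0 ⊗ₘ 𝟙 (L.obj (𝟙_ C))) ≫
        (R.map (λ_ (𝟙_ C)).inv ⊗ₘ 𝟙 (L.obj (𝟙_ C))) ≫
        ((νrR (𝟙_ C) (𝟙_ C) ⊗ₘ 𝟙 (L.obj (𝟙_ C))) ≫
        (α_ (L.obj (𝟙_ C)) (R.obj (𝟙_ C)) (L.obj (𝟙_ C))).hom ≫
        (𝟙 (L.obj (𝟙_ C)) ⊗ₘ νrL (𝟙_ C) (𝟙_ C))) ≫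
        (𝟙 (L.obj (𝟙_ C)) ⊗ₘ L.map (λ_ (𝟙_ C)).hom) ≫
        (𝟙 (L.obj (𝟙_ C)) ⊗ₘ L0) ≫ (ρ_ (L.obj (𝟙_ C))).hom := by
          simp only [id_tensor_comp, comp_tensor_id, Category.assoc]
    _ = (λ_ (L.obj (𝟙_ C))).inv ≫ (r0 ⊗ₘ 𝟙 (L.obj (𝟙_ C))) ≫
        ((R.map (λ_ (𝟙_ C)).inv ⊗ₘ 𝟙 (L.obj (𝟙_ C))) ≫ νrL (𝟙_ C ⊗ 𝟙_ C) (𝟙_ C)) ≫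
        L.map (α_ (𝟙_ C) (𝟙_ C) (𝟙_ C)).hom ≫
        (L2 (𝟙_ C) (𝟙_ C ⊗ 𝟙_ C) ≫ (𝟙 (L.obj (𝟙_ C)) ⊗ₘ L.map (λ_ (𝟙_ C)).hom)) ≫
        (𝟙 (L.obj (𝟙_ C)) ⊗ₘ L0) ≫ (ρ_ (L.obj (𝟙_ C))).hom := by
          rw [lf4c]; simp only [Category.assoc]
    _ = ((λ_ (L.obj (𝟙_ C))).inv ≫ (r0 ⊗ₘ 𝟙 (L.obj (𝟙_ C))) ≫ νrL (𝟙_ C) (𝟙_ C)) ≫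
        L.map ((λ_ (𝟙_ C)).inv ⊗ₘ 𝟙 (𝟙_ C)) ≫ L.map (α_ (𝟙_ C) (𝟙_ C) (𝟙_ C)).hom ≫
        L.map (𝟙 (𝟙_ C) ⊗ₘ (λ_ (𝟙_ C)).hom) ≫
        (L2 (𝟙_ C) (𝟙_ C) ≫ (𝟙 (L.obj (𝟙_ C)) ⊗ₘ L0) ≫ (ρ_ (L.obj (𝟙_ C))).hom) := by
          rw [n3, n4]; simp only [Category.assoc, L.map_comp]
    _ = L.map ((λ_ (𝟙_ C)).inv ≫ ((λ_ (𝟙_ C)).inv ⊗ₘ 𝟙 (𝟙_ C)) ≫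
        (α_ (𝟙_ C) (𝟙_ C) (𝟙_ C)).hom ≫ (𝟙 (𝟙_ C) ⊗ₘ (λ_ (𝟙_ C)).hom) ≫
        (ρ_ (𝟙_ C)).hom) := by
          rw [lf1c, u1]; simp only [Category.assoc, L.map_comp]
    _ = 𝟙 (L.obj (𝟙_ C)) := by rw [coh2]; simp
end

section
/- Let (R, L) : C → D be a linear functor between left autonomous categories. Then for every object X, RSX is a left dual of LX, with unit 𝔡 = ν^r_R ∘ R d_X ∘ r_0 : 1 → LX ⊗ RSX and counit 𝔢 = L_0 ∘ L e_X ∘ ν^r_L : RSX ⊗ LX → 1 satisfying the triangle identities. -/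
open CategoryTheory MonoidalCategory

universe v₁ v₂ u₁ u₂

variable {C : Type u₁} [Category.{v₁} C] [MonoidalCategory C]
variable {D : Type u₂} [Category.{v₂} D] [MonoidalCategory D]

/-- For a linear functor `(R, L)` between left autonomous categories, `R(SX)` is a left dual
of `LX`, with unit `𝔡 = ν^r_R ∘ R d_X ∘ r₀` and counit `𝔢 = L₀ ∘ L e_X ∘ ν^r_L`. -/
theorem linearFunctor_RS_left_dual_of_L
    {R L : C ⥤ D}
    {r2 : ∀ X Y : C, R.obj X ⊗ R.obj Y ⟶ R.obj (X ⊗ Y)} {r0 : 𝟙_ D ⟶ R.obj (𝟙_ C)}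
    {L2 : ∀ X Y : C, L.obj (X ⊗ Y) ⟶ L.obj X ⊗ L.obj Y} {L0 : L.obj (𝟙_ C) ⟶ 𝟙_ D}
    {νrR : ∀ X Y : C, R.obj (X ⊗ Y) ⟶ L.obj X ⊗ R.obj Y}
    {νlR : ∀ X Y : C, R.obj (X ⊗ Y) ⟶ R.obj X ⊗ L.obj Y}
    {νrL : ∀ X Y : C, R.obj X ⊗ L.obj Y ⟶ L.obj (X ⊗ Y)}
    {νlL : ∀ X Y : C, L.obj X ⊗ R.obj Y ⟶ L.obj (X ⊗ Y)}
    (h : IsLinearFunctor R L r2 r0 L2 L0 νrR νlR νrL νlL)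
    (SC : C → C) (dC : ∀ X : C, 𝟙_ C ⟶ X ⊗ SC X) (eC : ∀ X : C, SC X ⊗ X ⟶ 𝟙_ C)
    (hC1 : ∀ X : C, (λ_ X).inv ≫ (dC X ⊗ₘ 𝟙 X) ≫ (α_ X (SC X) X).hom ≫
      (𝟙 X ⊗ₘ eC X) ≫ (ρ_ X).hom = 𝟙 X)
    (hC2 : ∀ X : C, (ρ_ (SC X)).inv ≫ (𝟙 (SC X) ⊗ₘ dC X) ≫ (α_ (SC X) X (SC X)).inv ≫
      (eC X ⊗ₘ 𝟙 (SC X)) ≫ (λ_ (SC X)).hom = 𝟙 (SC X))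
    (SD : D → D) (dD : ∀ X : D, 𝟙_ D ⟶ X ⊗ SD X) (eD : ∀ X : D, SD X ⊗ X ⟶ 𝟙_ D)
    (hD1 : ∀ X : D, (λ_ X).inv ≫ (dD X ⊗ₘ 𝟙 X) ≫ (α_ X (SD X) X).hom ≫
      (𝟙 X ⊗ₘ eD X) ≫ (ρ_ X).hom = 𝟙 X)
    (hD2 : ∀ X : D, (ρ_ (SD X)).inv ≫ (𝟙 (SD X) ⊗ₘ dD X) ≫ (α_ (SD X) X (SD X)).inv ≫
      (eD X ⊗ₘ 𝟙 (SD X)) ≫ (λ_ (SD X)).hom = 𝟙 (SD X))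
    (X : C) :
    ((λ_ (L.obj X)).inv ≫
      ((r0 ≫ R.map (dC X) ≫ νrR X (SC X)) ⊗ₘ 𝟙 (L.obj X)) ≫
      (α_ (L.obj X) (R.obj (SC X)) (L.obj X)).hom ≫
      (𝟙 (L.obj X) ⊗ₘ (νrL (SC X) X ≫ L.map (eC X) ≫ L0)) ≫
      (ρ_ (L.obj X)).hom = 𝟙 (L.obj X)) ∧
    ((ρ_ (R.obj (SC X))).inv ≫
      (𝟙 (R.obj (SC X)) ⊗ₘ (r0 ≫ R.map (dC X) ≫ νrR X (SC X))) ≫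
      (α_ (R.obj (SC X)) (L.obj X) (R.obj (SC X))).inv ≫
      ((νrL (SC X) X ≫ L.map (eC X) ≫ L0) ⊗ₘ 𝟙 (R.obj (SC X))) ≫
      (λ_ (R.obj (SC X))).hom = 𝟙 (R.obj (SC X))) := by

  have hru : L2 X (𝟙_ C) ≫ (𝟙 (L.obj X) ⊗ₘ L0) ≫ (ρ_ (L.obj X)).hom = L.map (ρ_ X).hom := by
    have h1 := h.L2_right_unit X
    have h2 : L2 X (𝟙_ C) ≫ (𝟙 (L.obj X) ⊗ₘ L0) = L.map (ρ_ X).hom ≫ (ρ_ (L.obj X)).inv := by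
      rw [← h1, ← L.map_comp_assoc, Iso.hom_inv_id, L.map_id, Category.id_comp]
    rw [← Category.assoc, h2, Category.assoc, Iso.inv_hom_id, Category.comp_id]
  have hru2 : (ρ_ (R.obj (SC X))).inv ≫ (𝟙 (R.obj (SC X)) ⊗ₘ r0) ≫ r2 (SC X) (𝟙_ C) =
      R.map (ρ_ (SC X)).inv := by
    have h1 := h.r2_right_unit (SC X)
    have h2 : (𝟙 (R.obj (SC X)) ⊗ₘ r0) ≫ r2 (SC X) (𝟙_ C) =
        (ρ_ (R.obj (SC X))).hom ≫ R.map (ρ_ (SC X)).inv := by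
      rw [← h1]
      simp only [Category.assoc, ← R.map_comp, Iso.hom_inv_id, R.map_id, Category.comp_id]
    rw [h2, Iso.inv_hom_id_assoc]
  constructor
  · rw [comp_tensor_id, comp_tensor_id, id_tensor_comp, id_tensor_comp]
    simp only [Category.assoc]
    slice_lhs 4 6 => rw [h.lf4c X (SC X) X]
    slice_lhs 6 7 =>
      rw [show (𝟙 (L.obj X) ⊗ₘ L.map (eC X)) = (L.map (𝟙 X) ⊗ₘ L.map (eC X)) by rw [L.map_id],
        h.L2_natural (𝟙 X) (eC X)]
    slice_lhs 7 9 => rw [hru]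
    slice_lhs 3 4 =>
      rw [show (R.map (dC X) ⊗ₘ 𝟙 (L.obj X)) = (R.map (dC X) ⊗ₘ L.map (𝟙 X)) by rw [L.map_id],
        h.νrL_natural (dC X) (𝟙 X)]
    slice_lhs 1 3 => rw [h.lf1c X]
    simp only [← L.map_comp]
    simp only [Category.assoc]
    rw [hC1 X, L.map_id]
  · rw [id_tensor_comp, id_tensor_comp, comp_tensor_id, comp_tensor_id]
    simp only [Category.assoc]
    slice_lhs 4 6 => rw [h.lf4a (SC X) X (SC X)]
    slice_lhs 3 4 =>
      rw [show (𝟙 (R.obj (SC X)) ⊗ₘ R.map (dC X)) = (R.map (𝟙 (SC X)) ⊗ₘ R.map (dC X)) by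
        rw [R.map_id], h.r2_natural (𝟙 (SC X)) (dC X)]
    slice_lhs 1 3 => rw [hru2]
    slice_lhs 4 5 =>
      rw [show (L.map (eC X) ⊗ₘ 𝟙 (R.obj (SC X))) = (L.map (eC X) ⊗ₘ R.map (𝟙 (SC X))) by
        rw [R.map_id], h.νrR_natural (eC X) (𝟙 (SC X))]
    slice_lhs 5 7 => rw [h.lf1a (SC X)]
    simp only [← R.map_comp, Category.assoc]
    rw [hC2 X, R.map_id]
end

section
/- Let F : C → D be a Frobenius monoidal functor between monoidal categories. Then setting R = L = F, r_2 = f_2, r_0 = f_0, L_2 = F_2, L_0 = F_0, and ν^r_R = ν^l_R = F_2, ν^r_L = ν^l_L = f_2, the pair (R, L) is a linear functor: all the Cockett–Seely linear functor coherence axioms hold. -/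
open CategoryTheory MonoidalCategory

universe v₁ v₂ u₁ u₂

variable {C : Type u₁} [Category.{v₁} C] [MonoidalCategory C]
variable {D : Type u₂} [Category.{v₂} D] [MonoidalCategory D]

open CategoryTheory.Functor.LaxMonoidal CategoryTheory.Functor.OplaxMonoidal

/-- A Frobenius monoidal functor `F` induces a linear functor with equal components
`R = L = F`, costrengths `ν^r_R = ν^l_R = F₂` (the oplax structure `δ`) and strengths
`ν^r_L = ν^l_L = f₂` (the lax structure `μ`): all the Cockett–Seely axioms hold. -/
theorem frobenius_gives_linearFunctor
    (F : C ⥤ D) [F.LaxMonoidal] [F.OplaxMonoidal]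
    (frob1 : ∀ X Y Z : C,
      μ F X (Y ⊗ Z) ≫ F.map (α_ X Y Z).inv ≫ δ F (X ⊗ Y) Z =
        (𝟙 (F.obj X) ⊗ₘ δ F Y Z) ≫ (α_ (F.obj X) (F.obj Y) (F.obj Z)).inv ≫
          (μ F X Y ⊗ₘ 𝟙 (F.obj Z)))
    (frob2 : ∀ X Y Z : C,
      μ F (X ⊗ Y) Z ≫ F.map (α_ X Y Z).hom ≫ δ F X (Y ⊗ Z) =
        (δ F X Y ⊗ₘ 𝟙 (F.obj Z)) ≫ (α_ (F.obj X) (F.obj Y) (F.obj Z)).hom ≫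
          (𝟙 (F.obj X) ⊗ₘ μ F Y Z)) :
    IsLinearFunctor F F (μ F) (ε F) (δ F) (η F) (δ F) (δ F) (μ F) (μ F) := by
  constructor <;> intros
  case r2_right_unit X =>
    simp only [id_tensorHom]
    exact (Functor.LaxMonoidal.right_unitality F X).symm
  case r2_left_unit X =>
    simp only [tensorHom_id]
    exact (Functor.LaxMonoidal.left_unitality F X).symm
  case lf1a X =>
    simpa only [tensorHom_id] using Functor.OplaxMonoidal.left_unitality_hom F X
  case lf1b X =>
    simpa only [id_tensorHom] using Functor.OplaxMonoidal.right_unitality_hom F X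
  case lf1c X =>
    simpa only [tensorHom_id] using Functor.LaxMonoidal.left_unitality_inv F X
  case lf1d X =>
    simpa only [id_tensorHom] using Functor.LaxMonoidal.right_unitality_inv F X
  all_goals simp [MonoidalCategory.tensorHom_def, frob1, frob2]
end

section
/- Let (R, L) : C → D be a linear functor between monoidal categories, and suppose there is a natural isomorphism ω : R ≅ L satisfying ν^r_L ∘ (1 ⊗ ω) = ω ∘ r_2, ν^l_L ∘ (ω ⊗ 1) = ω ∘ r_2, (1 ⊗ ω) ∘ ν^r_R = L_2 ∘ ω, and (ω ⊗ 1) ∘ ν^l_R = L_2 ∘ ω. Then R, equipped with its lax structure (r_2, r_0) and the oplax structure transported from L along ω (namely R_2 = (ω⁻¹ ⊗ ω⁻¹) ∘ L_2 ∘ ω and R_0 = L_0 ∘ ω), is a Frobenius monoidal functor. -/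
open CategoryTheory MonoidalCategory

universe v₁ v₂ u₁ u₂

variable {C : Type u₁} [Category.{v₁} C] [MonoidalCategory C]
variable {D : Type u₂} [Category.{v₂} D] [MonoidalCategory D]

set_option maxHeartbeats 1000000 in
/-- If `(R, L)` is a linear functor and `ω : R ≅ L` is a natural isomorphism compatible with the
linear structure (the four conditions of the paper), then `R`, with its lax structure and the
oplax structure transported from `L` along `ω`, is Frobenius monoidal. -/
theorem linearFunctor_with_compatible_iso_frobenius
    {R L : C ⥤ D}
    {r2 : ∀ X Y : C, R.obj X ⊗ R.obj Y ⟶ R.obj (X ⊗ Y)} {r0 : 𝟙_ D ⟶ R.obj (𝟙_ C)}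
    {L2 : ∀ X Y : C, L.obj (X ⊗ Y) ⟶ L.obj X ⊗ L.obj Y} {L0 : L.obj (𝟙_ C) ⟶ 𝟙_ D}
    {νrR : ∀ X Y : C, R.obj (X ⊗ Y) ⟶ L.obj X ⊗ R.obj Y}
    {νlR : ∀ X Y : C, R.obj (X ⊗ Y) ⟶ R.obj X ⊗ L.obj Y}
    {νrL : ∀ X Y : C, R.obj X ⊗ L.obj Y ⟶ L.obj (X ⊗ Y)}
    {νlL : ∀ X Y : C, L.obj X ⊗ R.obj Y ⟶ L.obj (X ⊗ Y)}
    (h : IsLinearFunctor R L r2 r0 L2 L0 νrR νlR νrL νlL)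
    (ω : R ≅ L)
    (hω1 : ∀ X Y : C, (𝟙 (R.obj X) ⊗ₘ ω.hom.app Y) ≫ νrL X Y = r2 X Y ≫ ω.hom.app (X ⊗ Y))
    (hω2 : ∀ X Y : C, (ω.hom.app X ⊗ₘ 𝟙 (R.obj Y)) ≫ νlL X Y = r2 X Y ≫ ω.hom.app (X ⊗ Y))
    (hω3 : ∀ X Y : C, νrR X Y ≫ (𝟙 (L.obj X) ⊗ₘ ω.hom.app Y) = ω.hom.app (X ⊗ Y) ≫ L2 X Y)
    (hω4 : ∀ X Y : C, νlR X Y ≫ (ω.hom.app X ⊗ₘ 𝟙 (L.obj Y)) = ω.hom.app (X ⊗ Y) ≫ L2 X Y) :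
    (∀ X Y Z : C,
      r2 X (Y ⊗ Z) ≫ R.map (α_ X Y Z).inv ≫
        (ω.hom.app ((X ⊗ Y) ⊗ Z) ≫ L2 (X ⊗ Y) Z ≫
          (ω.inv.app (X ⊗ Y) ⊗ₘ ω.inv.app Z)) =
      (𝟙 (R.obj X) ⊗ₘ (ω.hom.app (Y ⊗ Z) ≫ L2 Y Z ≫ (ω.inv.app Y ⊗ₘ ω.inv.app Z))) ≫
        (α_ (R.obj X) (R.obj Y) (R.obj Z)).inv ≫ (r2 X Y ⊗ₘ 𝟙 (R.obj Z))) ∧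
    (∀ X Y Z : C,
      r2 (X ⊗ Y) Z ≫ R.map (α_ X Y Z).hom ≫
        (ω.hom.app (X ⊗ (Y ⊗ Z)) ≫ L2 X (Y ⊗ Z) ≫
          (ω.inv.app X ⊗ₘ ω.inv.app (Y ⊗ Z))) =
      ((ω.hom.app (X ⊗ Y) ≫ L2 X Y ≫ (ω.inv.app X ⊗ₘ ω.inv.app Y)) ⊗ₘ 𝟙 (R.obj Z)) ≫
        (α_ (R.obj X) (R.obj Y) (R.obj Z)).hom ≫
        (𝟙 (R.obj X) ⊗ₘ r2 Y Z)) := by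
  have eνlR : ∀ X Y : C,
      ω.hom.app (X ⊗ Y) ≫ L2 X Y ≫ (ω.inv.app X ⊗ₘ 𝟙 (L.obj Y)) = νlR X Y := by
    intro X Y
    rw [← Category.assoc, ← hω4, Category.assoc, tensorHom_comp_tensorHom]
    simp
  have eνrR : ∀ X Y : C,
      ω.hom.app (X ⊗ Y) ≫ L2 X Y ≫ (𝟙 (L.obj X) ⊗ₘ ω.inv.app Y) = νrR X Y := by
    intro X Y
    rw [← Category.assoc, ← hω3, Category.assoc, tensorHom_comp_tensorHom]
    simp
  constructor
  · intro X Y Z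
    have split1 : (ω.inv.app (X ⊗ Y) ⊗ₘ ω.inv.app Z) =
        (ω.inv.app (X ⊗ Y) ⊗ₘ 𝟙 (L.obj Z)) ≫ (𝟙 (R.obj (X ⊗ Y)) ⊗ₘ ω.inv.app Z) := by
      rw [tensorHom_comp_tensorHom]; simp
    have combine : νlR Y Z ≫ (𝟙 (R.obj Y) ⊗ₘ ω.inv.app Z) =
        ω.hom.app (Y ⊗ Z) ≫ L2 Y Z ≫ (ω.inv.app Y ⊗ₘ ω.inv.app Z) := by
      rw [← eνlR]
      simp only [Category.assoc, tensorHom_comp_tensorHom, Category.comp_id, Category.id_comp]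
    have key : (α_ (R.obj X) (R.obj Y) (L.obj Z)).inv ≫ (r2 X Y ⊗ₘ 𝟙 (L.obj Z)) ≫
          (𝟙 (R.obj (X ⊗ Y)) ⊗ₘ ω.inv.app Z) =
        (𝟙 (R.obj X) ⊗ₘ (𝟙 (R.obj Y) ⊗ₘ ω.inv.app Z)) ≫
          (α_ (R.obj X) (R.obj Y) (R.obj Z)).inv ≫ (r2 X Y ⊗ₘ 𝟙 (R.obj Z)) := by
      have h1 : (r2 X Y ⊗ₘ 𝟙 (L.obj Z)) ≫ (𝟙 (R.obj (X ⊗ Y)) ⊗ₘ ω.inv.app Z) =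
          ((𝟙 (R.obj X) ⊗ₘ 𝟙 (R.obj Y)) ⊗ₘ ω.inv.app Z) ≫ (r2 X Y ⊗ₘ 𝟙 (R.obj Z)) := by
        rw [tensorHom_comp_tensorHom, tensorHom_comp_tensorHom]; simp
      rw [h1, ← Category.assoc, ← associator_inv_naturality, Category.assoc]
    calc r2 X (Y ⊗ Z) ≫ R.map (α_ X Y Z).inv ≫
          (ω.hom.app ((X ⊗ Y) ⊗ Z) ≫ L2 (X ⊗ Y) Z ≫
            (ω.inv.app (X ⊗ Y) ⊗ₘ ω.inv.app Z))
        = r2 X (Y ⊗ Z) ≫ R.map (α_ X Y Z).inv ≫ νlR (X ⊗ Y) Z ≫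
            (𝟙 (R.obj (X ⊗ Y)) ⊗ₘ ω.inv.app Z) := by
          rw [split1, ← eνlR]; simp only [Category.assoc]
      _ = (𝟙 (R.obj X) ⊗ₘ νlR Y Z) ≫ (α_ (R.obj X) (R.obj Y) (L.obj Z)).inv ≫
            (r2 X Y ⊗ₘ 𝟙 (L.obj Z)) ≫ (𝟙 (R.obj (X ⊗ Y)) ⊗ₘ ω.inv.app Z) := by
          slice_lhs 1 3 => rw [← h.lf5b]
          simp only [Category.assoc]
      _ = (𝟙 (R.obj X) ⊗ₘ (ω.hom.app (Y ⊗ Z) ≫ L2 Y Z ≫ (ω.inv.app Y ⊗ₘ ω.inv.app Z))) ≫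
            (α_ (R.obj X) (R.obj Y) (R.obj Z)).inv ≫ (r2 X Y ⊗ₘ 𝟙 (R.obj Z)) := by
          rw [key, ← Category.assoc, ← id_tensor_comp, combine]
  · intro X Y Z
    have split1 : (ω.inv.app X ⊗ₘ ω.inv.app (Y ⊗ Z)) =
        (𝟙 (L.obj X) ⊗ₘ ω.inv.app (Y ⊗ Z)) ≫ (ω.inv.app X ⊗ₘ 𝟙 (R.obj (Y ⊗ Z))) := by
      rw [tensorHom_comp_tensorHom]; simp
    have combine : νrR X Y ≫ (ω.inv.app X ⊗ₘ 𝟙 (R.obj Y)) =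
        ω.hom.app (X ⊗ Y) ≫ L2 X Y ≫ (ω.inv.app X ⊗ₘ ω.inv.app Y) := by
      rw [← eνrR]
      simp only [Category.assoc, tensorHom_comp_tensorHom, Category.comp_id, Category.id_comp]
    have key : (α_ (L.obj X) (R.obj Y) (R.obj Z)).hom ≫ (𝟙 (L.obj X) ⊗ₘ r2 Y Z) ≫
          (ω.inv.app X ⊗ₘ 𝟙 (R.obj (Y ⊗ Z))) =
        ((ω.inv.app X ⊗ₘ 𝟙 (R.obj Y)) ⊗ₘ 𝟙 (R.obj Z)) ≫
          (α_ (R.obj X) (R.obj Y) (R.obj Z)).hom ≫ (𝟙 (R.obj X) ⊗ₘ r2 Y Z) := by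
      have h1 : (𝟙 (L.obj X) ⊗ₘ r2 Y Z) ≫ (ω.inv.app X ⊗ₘ 𝟙 (R.obj (Y ⊗ Z))) =
          (ω.inv.app X ⊗ₘ (𝟙 (R.obj Y) ⊗ₘ 𝟙 (R.obj Z))) ≫ (𝟙 (R.obj X) ⊗ₘ r2 Y Z) := by
        rw [tensorHom_comp_tensorHom, tensorHom_comp_tensorHom]; simp
      rw [h1, ← Category.assoc, ← associator_naturality, Category.assoc]
    calc r2 (X ⊗ Y) Z ≫ R.map (α_ X Y Z).hom ≫
          (ω.hom.app (X ⊗ (Y ⊗ Z)) ≫ L2 X (Y ⊗ Z) ≫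
            (ω.inv.app X ⊗ₘ ω.inv.app (Y ⊗ Z)))
        = r2 (X ⊗ Y) Z ≫ R.map (α_ X Y Z).hom ≫ νrR X (Y ⊗ Z) ≫
            (ω.inv.app X ⊗ₘ 𝟙 (R.obj (Y ⊗ Z))) := by
          rw [split1, ← eνrR]; simp only [Category.assoc]
      _ = (νrR X Y ⊗ₘ 𝟙 (R.obj Z)) ≫ (α_ (L.obj X) (R.obj Y) (R.obj Z)).hom ≫
            (𝟙 (L.obj X) ⊗ₘ r2 Y Z) ≫ (ω.inv.app X ⊗ₘ 𝟙 (R.obj (Y ⊗ Z))) := by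
          slice_lhs 1 3 => rw [← h.lf5a]
          simp only [Category.assoc]
      _ = ((ω.hom.app (X ⊗ Y) ≫ L2 X Y ≫ (ω.inv.app X ⊗ₘ ω.inv.app Y)) ⊗ₘ 𝟙 (R.obj Z)) ≫
            (α_ (R.obj X) (R.obj Y) (R.obj Z)).hom ≫ (𝟙 (R.obj X) ⊗ₘ r2 Y Z) := by
          rw [key, ← Category.assoc, ← comp_tensor_id, combine]
end
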